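/- Let X = Σ_{ℓ=1}^L W_ℓ H S_{ℓ−1} with W_ℓ ∈ ℝ_+^{N×K} for ℓ = 1,…,L and H ∈ ℝ_+^{K×T}, and set V = [W_1 ⋯ W_L] ∈ ℝ_+^{N×KL} and G = [H S_0; H S_1; …; H S_{L−1}] ∈ ℝ_+^{KL×T} (vertical stacking). Suppose: (A) G = [A M] Π for some diagonal matrix A ∈ ℝ^{KL×KL} with strictly positive diagonal entries, some M ∈ ℝ_+^{KL×(T−KL)}, and some T×T permutation matrix Π; (B) there is δ > 0 such that for any two distinct rows h_i, h_j of H one has cos_{2L}(h_i, h_j) ≤ 1 − δ, and for any row h_i of H and any τ, ℓ ∈ {1,…,L−1} with τ ≠ ℓ one has cos(S_τᵀ h_i, S_ℓᵀ h_i) ≤ 1 − δ; (C) V has rank KL. Then the factorization is unique up to permutation and positive scaling: if W'_1,…,W'_L ∈ ℝ_+^{N×K} and H' ∈ ℝ_+^{K×T} also satisfy X = Σ_{ℓ=1}^L W'_ℓ H' S_{ℓ−1} and their associated matrices V' = [W'_1 ⋯ W'_L] and G' = [H' S_0; …; H' S_{L−1}] satisfy (A), (B) (for some δ' > 0), and (C),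 then V = V' Λ P for some KL×KL diagonal matrix Λ with strictly positive diagonal entries and some KL×KL permutation matrix P. -/

import Mathlib

open Matrix BigOperators

noncomputable section

/-- The `T × T` shift matrix `S_τ` with ones on the `τ`-th upper diagonal. -/
def shiftMat (T τ : ℕ) : Matrix (Fin T) (Fin T) ℝ :=
  Matrix.of fun i j => if (j : ℕ) = (i : ℕ) + τ then 1 else 0

/-- Right shift with zero padding: `(S_τᵀ x)_j = x_{j-τ}`. -/
def shift {T : ℕ} (τ : ℕ) (x : Fin T → ℝ) : Fin T → ℝ :=
  (shiftMat T τ)ᵀ.mulVec x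

/-- Euclidean dot product. -/
def dot {T : ℕ} (u v : Fin T → ℝ) : ℝ := ∑ i, u i * v i

/-- Euclidean norm. -/
def euclNorm {T : ℕ} (u : Fin T → ℝ) : ℝ := Real.sqrt (∑ i, u i ^ 2)

open Classical in
/-- Cosine of the angle between two vectors, with the convention that it is `0`
if either vector is zero. -/
def vcos {T : ℕ} (u v : Fin T → ℝ) : ℝ :=
  if u = 0 ∨ v = 0 then 0 else dot u v / (euclNorm u * euclNorm v)

/-- The `L`-shift cosine similarity `cos_L`. -/
def cosL {T : ℕ} (L : ℕ) (u v : Fin T → ℝ) : ℝ :=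
  ⨆ ℓ : Fin L, max (vcos (shift (ℓ : ℕ) u) v) (vcos u (shift (ℓ : ℕ) v))


/-- Condition (A) [Separable]: `G = [A M] Π` for a diagonal matrix `A` with strictly
positive diagonal entries, a nonnegative `M`, and a column permutation. The equivalence
`e : Fin T ≃ (Fin L × Fin K) ⊕ Fin (T − L·K)` plays the role of the permutation `Π`
composed with the identification of the columns of the concatenation `[A M]`. -/
def SepCond {K T L : ℕ} (G : Matrix (Fin L × Fin K) (Fin T) ℝ) : Prop :=
  ∃ (a : Fin L × Fin K → ℝ) (M : Matrix (Fin L × Fin K) (Fin (T - L * K)) ℝ)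
    (e : Fin T ≃ (Fin L × Fin K) ⊕ Fin (T - L * K)),
      (∀ i, 0 < a i) ∧ (∀ i j, 0 ≤ M i j) ∧
      ∀ j t, G j t = Matrix.fromCols (Matrix.diagonal a) M j (e t)

/-- Condition (B) [Sequentially unique] with parameter `δ`: distinct rows of `H` have
`2L`-shift similarity at most `1 − δ`, and distinct shifts (by `τ, ℓ ∈ {1,…,L−1}`) of any
row of `H` have cosine at most `1 − δ`. -/
def SeqUnique {K T : ℕ} (L : ℕ) (H : Matrix (Fin K) (Fin T) ℝ) (δ : ℝ) : Prop :=
  (∀ i j : Fin K, i ≠ j → cosL (2 * L) (H i) (H j) ≤ 1 - δ) ∧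
  (∀ i : Fin K, ∀ τ ℓ : ℕ, 1 ≤ τ → τ ≤ L - 1 → 1 ≤ ℓ → ℓ ≤ L - 1 → τ ≠ ℓ →
    vcos (shift τ (H i)) (shift ℓ (H i)) ≤ 1 - δ)

lemma my_rank_cancel {N : ℕ} {ι κ : Type*} [Fintype ι] [DecidableEq ι] [Fintype κ]
    (V : Matrix (Fin N) ι ℝ) (hr : V.rank = Fintype.card ι)
    (A B : Matrix ι κ ℝ) (h : V * A = V * B) : A = B := by
  have h1 := LinearMap.finrank_range_add_finrank_ker V.mulVecLin
  rw [Module.finrank_fintype_fun_eq_card] at h1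
  have hrk : V.rank = Module.finrank ℝ (LinearMap.range V.mulVecLin) := rfl
  have hk0 : Module.finrank ℝ (LinearMap.ker V.mulVecLin) = 0 := by omega
  have hker : LinearMap.ker V.mulVecLin = ⊥ := Submodule.finrank_eq_zero.mp hk0
  have hinj : Function.Injective V.mulVecLin := LinearMap.ker_eq_bot.mp hker
  ext i j
  have hcol : V.mulVecLin (fun m => A m j) = V.mulVecLin (fun m => B m j) := by
    funext n
    have := congrArg (fun M => M n j) h
    simpa [Matrix.mul_apply, Matrix.mulVecLin_apply, Matrix.mulVec, dotProduct] using this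
  exact congrFun (hinj hcol) i

/-- Unique Solution: under (A) separability, (B) sequential uniqueness, and
(C) full rank of `V`, the convolutive NMF `X = Σ_ℓ W_ℓ H S_{ℓ−1}` is unique up to
permutation and positive scaling of the columns of `V = [W_1 ⋯ W_L]`. -/
theorem cnmf_unique_solution (N K T L : ℕ) (hL : 0 < L)
    (W W' : Fin L → Matrix (Fin N) (Fin K) ℝ) (H H' : Matrix (Fin K) (Fin T) ℝ)
    (hWpos : ∀ ℓ i k, 0 ≤ W ℓ i k) (hHpos : ∀ k t, 0 ≤ H k t)
    (hW'pos : ∀ ℓ i k, 0 ≤ W' ℓ i k) (hH'pos : ∀ k t, 0 ≤ H' k t)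
    (X : Matrix (Fin N) (Fin T) ℝ)
    (hX : X = ∑ ℓ : Fin L, W ℓ * H * shiftMat T (ℓ : ℕ))
    (hX' : X = ∑ ℓ : Fin L, W' ℓ * H' * shiftMat T (ℓ : ℕ))
    (V V' : Matrix (Fin N) (Fin L × Fin K) ℝ)
    (hV : ∀ (i : Fin N) (ℓ : Fin L) (k : Fin K), V i (ℓ, k) = W ℓ i k)
    (hV' : ∀ (i : Fin N) (ℓ : Fin L) (k : Fin K), V' i (ℓ, k) = W' ℓ i k)
    (G G' : Matrix (Fin L × Fin K) (Fin T) ℝ)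
    (hG : ∀ (ℓ : Fin L) (k : Fin K) (t : Fin T),
      G (ℓ, k) t = (H * shiftMat T (ℓ : ℕ)) k t)
    (hG' : ∀ (ℓ : Fin L) (k : Fin K) (t : Fin T),
      G' (ℓ, k) t = (H' * shiftMat T (ℓ : ℕ)) k t)
    -- (A) for both factorizations
    (hA : SepCond G) (hA' : SepCond G')
    -- (B) for both factorizations
    (δ : ℝ) (hδ : 0 < δ) (hB : SeqUnique L H δ)
    (hB' : ∃ δ' : ℝ, 0 < δ' ∧ SeqUnique L H' δ')
    -- (C) for both factorizations
    (hC : V.rank = K * L) (hC' : V'.rank = K * L) :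
    ∃ (Λ : Fin L × Fin K → ℝ) (σ : Equiv.Perm (Fin L × Fin K)),
      (∀ i, 0 < Λ i) ∧ V = V' * Matrix.diagonal Λ * σ.permMatrix ℝ := by

  classical
  obtain ⟨a, M, e, hapos, hMpos, hGeq⟩ := hA
  obtain ⟨a', M', e', ha'pos, hM'pos, hG'eq⟩ := hA'
  have hcard : Fintype.card (Fin L × Fin K) = K * L := by
    simp [Fintype.card_prod, Nat.mul_comm]
  have hrV : V.rank = Fintype.card (Fin L × Fin K) := by rw [hcard]; exact hC
  have hrV' : V'.rank = Fintype.card (Fin L × Fin K) := by rw [hcard]; exact hC'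
  -- X = V * G and X = V' * G'
  have hXVG : X = V * G := by
    rw [hX]; ext i t
    rw [Matrix.sum_apply, Matrix.mul_apply, Fintype.sum_prod_type]
    refine Finset.sum_congr rfl fun ℓ _ => ?_
    rw [Matrix.mul_assoc, Matrix.mul_apply]
    refine Finset.sum_congr rfl fun k _ => ?_
    rw [hV, hG]
  have hXVG' : X = V' * G' := by
    rw [hX']; ext i t
    rw [Matrix.sum_apply, Matrix.mul_apply, Fintype.sum_prod_type]
    refine Finset.sum_congr rfl fun ℓ _ => ?_
    rw [Matrix.mul_assoc, Matrix.mul_apply]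
    refine Finset.sum_congr rfl fun k _ => ?_
    rw [hV', hG']
  -- special columns
  have hGcol : ∀ q p, G q (e.symm (Sum.inl p)) = if q = p then a p else 0 := by
    intro q p
    rw [hGeq, Equiv.apply_symm_apply, Matrix.fromCols_apply_inl, Matrix.diagonal_apply]
    split
    · rename_i h; rw [h]
    · rfl
  have hG'col : ∀ q p, G' q (e'.symm (Sum.inl p)) = if q = p then a' p else 0 := by
    intro q p
    rw [hG'eq, Equiv.apply_symm_apply, Matrix.fromCols_apply_inl, Matrix.diagonal_apply]
    split
    · rename_i h; rw [h]
    · rfl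
  have hGnn : ∀ q t, 0 ≤ G q t := by
    intro q t
    rw [hGeq]
    cases h : e t with
    | inl p => rw [Matrix.fromCols_apply_inl, Matrix.diagonal_apply]
               split
               · exact (hapos q).le
               · exact le_refl 0
    | inr p => rw [Matrix.fromCols_apply_inr]; exact hMpos q p
  have hG'nn : ∀ q t, 0 ≤ G' q t := by
    intro q t
    rw [hG'eq]
    cases h : e' t with
    | inl p => rw [Matrix.fromCols_apply_inl, Matrix.diagonal_apply]
               split
               · exact (ha'pos q).le
               · exact le_refl 0
    | inr p => rw [Matrix.fromCols_apply_inr]; exact hM'pos q p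
  -- Q and R
  set Q : Matrix (Fin L × Fin K) (Fin L × Fin K) ℝ :=
    fun q p => G' q (e.symm (Sum.inl p)) / a p with hQdef
  set R : Matrix (Fin L × Fin K) (Fin L × Fin K) ℝ :=
    fun q p => G q (e'.symm (Sum.inl p)) / a' p with hRdef
  have hQnn : ∀ q p, 0 ≤ Q q p := fun q p =>
    div_nonneg (hG'nn _ _) (hapos p).le
  have hRnn : ∀ q p, 0 ≤ R q p := fun q p =>
    div_nonneg (hGnn _ _) (ha'pos p).le
  have hVQ : V = V' * Q := by
    ext n p
    rw [Matrix.mul_apply]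
    have h1 : ∑ q, V' n q * Q q p = (∑ q, V' n q * G' q (e.symm (Sum.inl p))) / a p := by
      rw [Finset.sum_div]
      exact Finset.sum_congr rfl fun q _ => by rw [hQdef]; ring
    rw [h1]
    have h2 : (∑ q, V' n q * G' q (e.symm (Sum.inl p))) = X n (e.symm (Sum.inl p)) := by
      rw [hXVG', Matrix.mul_apply]
    rw [h2, hXVG, Matrix.mul_apply]
    have h3 : ∑ q, V n q * G q (e.symm (Sum.inl p)) = V n p * a p := by
      rw [Finset.sum_congr rfl fun q _ => by rw [hGcol]]
      simp [Finset.sum_ite_eq', mul_ite]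
    rw [h3, mul_div_assoc, div_self (hapos p).ne', mul_one]
  have hVR : V' = V * R := by
    ext n p
    rw [Matrix.mul_apply]
    have h1 : ∑ q, V n q * R q p = (∑ q, V n q * G q (e'.symm (Sum.inl p))) / a' p := by
      rw [Finset.sum_div]
      exact Finset.sum_congr rfl fun q _ => by rw [hRdef]; ring
    rw [h1]
    have h2 : (∑ q, V n q * G q (e'.symm (Sum.inl p))) = X n (e'.symm (Sum.inl p)) := by
      rw [hXVG, Matrix.mul_apply]
    rw [h2, hXVG', Matrix.mul_apply]
    have h3 : ∑ q, V' n q * G' q (e'.symm (Sum.inl p)) = V' n p * a' p := by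
      rw [Finset.sum_congr rfl fun q _ => by rw [hG'col]]
      simp [Finset.sum_ite_eq', mul_ite]
    rw [h3, mul_div_assoc, div_self (ha'pos p).ne', mul_one]
  -- R * Q = 1 and Q * R = 1
  have hRQ : R * Q = 1 := by
    refine my_rank_cancel V hrV _ _ ?_
    rw [← Matrix.mul_assoc, ← hVR, ← hVQ, Matrix.mul_one]
  have hQR : Q * R = 1 := by
    refine my_rank_cancel V' hrV' _ _ ?_
    rw [← Matrix.mul_assoc, ← hVQ, ← hVR, Matrix.mul_one]
  -- monomial structure
  have hk : ∀ i, ∃ q, 0 < R i q ∧ 0 < Q q i := by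
    intro i
    have h1 : ∑ q, R i q * Q q i = 1 := by
      have := congrArg (fun A => A i i) hRQ
      simpa [Matrix.mul_apply, Matrix.one_apply] using this
    by_contra hcon
    push_neg at hcon
    have : ∑ q, R i q * Q q i = 0 := by
      refine Finset.sum_eq_zero fun q _ => ?_
      rcases (hRnn i q).lt_or_eq with hR | hR
      · rcases (hQnn q i).lt_or_eq with hQ | hQ
        · exact absurd hQ (not_lt.mpr (hcon q hR))
        · rw [← hQ, mul_zero]
      · rw [← hR, zero_mul]
    rw [this] at h1; norm_num at h1
  choose k hkR hkQ using hk
  -- column support of Q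
  have hsupp : ∀ q i, q ≠ k i → Q q i = 0 := by
    intro q i hne
    have h0 : ∑ m, Q q m * R m (k i) = 0 := by
      have := congrArg (fun A => A q (k i)) hQR
      simpa [Matrix.mul_apply, Matrix.one_apply, hne] using this
    have := (Finset.sum_eq_zero_iff_of_nonneg
      (fun m _ => mul_nonneg (hQnn q m) (hRnn m (k i)))).mp h0 i (Finset.mem_univ i)
    rcases mul_eq_zero.mp this with h | h
    · exact h
    · exact absurd h (hkR i).ne'
  -- k injective
  have hkinj : Function.Injective k := by
    intro i j hij
    by_contra hne
    have h0 : ∑ m, R i m * Q m j = 0 := by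
      have := congrArg (fun A => A i j) hRQ
      simpa [Matrix.mul_apply, Matrix.one_apply, hne] using this
    have := (Finset.sum_eq_zero_iff_of_nonneg
      (fun m _ => mul_nonneg (hRnn i m) (hQnn m j))).mp h0 (k i) (Finset.mem_univ _)
    rcases mul_eq_zero.mp this with h | h
    · exact absurd h (hkR i).ne'
    · rw [hij] at h; exact absurd h (hkQ j).ne'
  have hkbij : Function.Bijective k := Finite.injective_iff_bijective.mp hkinj
  set σ : Equiv.Perm (Fin L × Fin K) := (Equiv.ofBijective k hkbij).symm with hσdef
  have hkσ : ∀ q, k (σ q) = q := fun q => (Equiv.ofBijective k hkbij).apply_symm_apply q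
  have hσk : ∀ i, σ (k i) = i := fun i => (Equiv.ofBijective k hkbij).symm_apply_apply i
  have hperm : ∀ m j, σ.permMatrix ℝ m j = if σ m = j then (1:ℝ) else 0 := by
    intro m j
    simp [Equiv.Perm.permMatrix, PEquiv.toMatrix_apply, Equiv.toPEquiv_apply,
      Option.mem_def, Matrix.one_apply]
  refine ⟨fun q => Q q (σ q), σ, fun q => ?_, ?_⟩
  · have := hkQ (σ q)
    rwa [hkσ q] at this
  · set Λ : Fin L × Fin K → ℝ := fun q => Q q (σ q) with hΛdef
    have hQfact : Q = Matrix.diagonal Λ * σ.permMatrix ℝ := by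
      ext q j
      rw [Matrix.mul_apply]
      rw [Finset.sum_eq_single q
        (fun m _ hm => by rw [Matrix.diagonal_apply_ne' _ hm, zero_mul])
        (fun h => absurd (Finset.mem_univ q) h)]
      rw [Matrix.diagonal_apply_eq, hperm]
      by_cases hqj : σ q = j
      · rw [if_pos hqj, mul_one]
        subst hqj
        rfl
      · rw [if_neg hqj, mul_zero]
        exact hsupp q j (fun hq => hqj (by rw [hq, hσk]))
    rw [hVQ, hQfact, Matrix.mul_assoc]

end
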